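/- Let A ∈ ℝ^{n×n} be an irreducible rate matrix and let z ∈ ℝ^n be a vector with all entries positive satisfying z^T A = 0 and 1^T z = 1. Then lim_{t→∞} e^{At} = 1·z^T, i.e., the matrix exponential e^{At} converges entrywise to the rank-one matrix 1·z^T as t → ∞. -/

import Mathlib

open Matrix Filter NormedSpace Nat

section Aux

attribute [local instance] Matrix.linftyOpNormedRing Matrix.linftyOpNormedAlgebra

variable {n : ℕ}

private lemma summable_exp_entry (M : Matrix (Fin n) (Fin n) ℝ) (i j : Fin n) :
    Summable fun k : ℕ => ((k ! : ℝ))⁻¹ * (M ^ k) i j := by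
  have hs : Summable fun k : ℕ => ((k ! : ℝ))⁻¹ • M ^ k := expSeries_summable' M
  have h1 := Pi.summable.mp hs i
  have h2 := Pi.summable.mp h1 j
  simpa [Matrix.smul_apply] using h2

private lemma exp_entry (M : Matrix (Fin n) (Fin n) ℝ) (i j : Fin n) :
    exp M i j = ∑' k : ℕ, ((k ! : ℝ))⁻¹ * (M ^ k) i j := by
  have hs : Summable fun k : ℕ => ((k ! : ℝ))⁻¹ • M ^ k := expSeries_summable' M
  have hs2 : ∀ i, Summable fun k : ℕ => (((k ! : ℝ))⁻¹ • M ^ k) i :=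
    fun i => Pi.summable.mp hs i
  have h1 : exp M = ∑' k : ℕ, ((k ! : ℝ))⁻¹ • M ^ k := by rw [exp_eq_tsum ℝ]
  rw [h1]
  erw [tsum_apply hs, tsum_apply (hs2 i)]
  simp [Matrix.smul_apply]

private lemma pow_entry_nonneg {N : Matrix (Fin n) (Fin n) ℝ} (hN : ∀ i j, 0 ≤ N i j) :
    ∀ (k : ℕ) (i j : Fin n), 0 ≤ (N ^ k) i j := by
  intro k
  induction k with
  | zero => intro i j; by_cases h : i = j <;> simp [pow_zero, Matrix.one_apply, h]
  | succ m ih =>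
    intro i j
    rw [pow_succ, Matrix.mul_apply]
    exact Finset.sum_nonneg fun a _ => mul_nonneg (ih i a) (hN a j)

private lemma exp_entry_nonneg {N : Matrix (Fin n) (Fin n) ℝ} (hN : ∀ i j, 0 ≤ N i j)
    (i j : Fin n) : 0 ≤ exp N i j := by
  rw [exp_entry]
  exact tsum_nonneg fun k => mul_nonneg (by positivity) (pow_entry_nonneg hN k i j)

private lemma le_exp_entry {N : Matrix (Fin n) (Fin n) ℝ} (hN : ∀ i j, 0 ≤ N i j)
    (k : ℕ) (i j : Fin n) : ((k ! : ℝ))⁻¹ * (N ^ k) i j ≤ exp N i j := by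
  rw [exp_entry]
  exact Summable.le_tsum (summable_exp_entry N i j) k
    (fun m _ => mul_nonneg (by positivity) (pow_entry_nonneg hN m i j))

private lemma exp_smul_one_add (s : ℝ) (N : Matrix (Fin n) (Fin n) ℝ) :
    exp (s • (1 : Matrix (Fin n) (Fin n) ℝ) + N) = Real.exp s • exp N := by
  have hc : Commute (s • (1 : Matrix (Fin n) (Fin n) ℝ)) N := by
    unfold Commute SemiconjBy
    rw [smul_mul_assoc, mul_smul_comm, one_mul, mul_one]
  rw [Matrix.exp_add_of_commute _ _ hc]
  have h1 : exp (s • (1 : Matrix (Fin n) (Fin n) ℝ)) = Real.exp s • 1 := by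
    have h2 := algebraMap_exp_comm (𝕂 := ℝ) (𝔸 := Matrix (Fin n) (Fin n) ℝ) s
    rw [Algebra.algebraMap_eq_smul_one, Algebra.algebraMap_eq_smul_one] at h2
    rw [Real.exp_eq_exp_ℝ]; exact h2.symm
  rw [h1, smul_mul_assoc, one_mul]

private lemma pow_row_sum {M : Matrix (Fin n) (Fin n) ℝ} (hM : ∀ i, ∑ j, M i j = 0) :
    ∀ (k : ℕ) (i : Fin n), ∑ j, (M ^ k) i j = if k = 0 then 1 else 0 := by
  intro k i
  cases k with
  | zero => simp [pow_zero, Matrix.one_apply]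
  | succ m =>
    simp only [Nat.succ_ne_zero, if_false, pow_succ, Matrix.mul_apply]
    rw [Finset.sum_comm]
    refine Finset.sum_eq_zero fun a _ => ?_
    rw [← Finset.mul_sum, hM a, mul_zero]

private lemma row_sum_exp {M : Matrix (Fin n) (Fin n) ℝ} (hM : ∀ i, ∑ j, M i j = 0)
    (i : Fin n) : ∑ j, exp M i j = 1 := by
  have h1 : ∀ j : Fin n, exp M i j = ∑' k : ℕ, ((k ! : ℝ))⁻¹ * (M ^ k) i j :=
    fun j => exp_entry M i j
  rw [Finset.sum_congr rfl fun j _ => h1 j]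
  rw [← Summable.tsum_finsetSum (fun j _ => summable_exp_entry M i j)]
  have h2 : ∀ k : ℕ, ∑ j, ((k ! : ℝ))⁻¹ * (M ^ k) i j
      = if k = 0 then 1 else 0 := by
    intro k
    rw [← Finset.mul_sum, pow_row_sum hM k i]
    rcases Nat.eq_zero_or_pos k with h | h
    · simp [h]
    · simp [Nat.pos_iff_ne_zero.mp h]
  rw [tsum_congr h2, tsum_eq_single 0 (by intro b hb; simp [hb])]
  simp

private lemma z_invariant {M : Matrix (Fin n) (Fin n) ℝ} {z : Fin n → ℝ}
    (hz : z ᵥ* M = 0) (j : Fin n) : ∑ i, z i * exp M i j = z j := by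
  have hpow : ∀ k : ℕ, z ᵥ* (M ^ (k + 1)) = 0 := by
    intro k
    induction k with
    | zero => simpa using hz
    | succ m ih =>
      rw [pow_succ, ← Matrix.vecMul_vecMul, ih, Matrix.zero_vecMul]
  have h1 : ∀ i : Fin n, z i * exp M i j
      = ∑' k : ℕ, z i * (((k ! : ℝ))⁻¹ * (M ^ k) i j) := by
    intro i; rw [exp_entry, ← tsum_mul_left]
  rw [Finset.sum_congr rfl fun i _ => h1 i]
  rw [← Summable.tsum_finsetSum (fun i _ => (summable_exp_entry M i j).mul_left (z i))]
  have h2 : ∀ k : ℕ, (∑ i, z i * (((k ! : ℝ))⁻¹ * (M ^ k) i j))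
      = if k = 0 then z j else 0 := by
    intro k
    have : ∑ i, z i * (((k ! : ℝ))⁻¹ * (M ^ k) i j)
        = ((k ! : ℝ))⁻¹ * (z ᵥ* (M ^ k)) j := by
      rw [Matrix.vecMul, dotProduct, Finset.mul_sum]
      exact Finset.sum_congr rfl fun i _ => by ring
    rw [this]
    cases k with
    | zero => simp [pow_zero, Matrix.vecMul_one]
    | succ m => simp [hpow m]
  rw [tsum_congr h2, tsum_eq_single 0 (by intro b hb; simp [hb])]
  simp

private lemma exists_pow_pos {N : Matrix (Fin n) (Fin n) ℝ} (hN : ∀ i j, 0 ≤ N i j)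
    {i j : Fin n} (h : Relation.TransGen (fun a b => 0 < N a b) i j) :
    ∃ k : ℕ, 0 < (N ^ k) i j := by
  induction h with
  | single hb => exact ⟨1, by simpa using hb⟩
  | tail hab hbc ih =>
    obtain ⟨k, hk⟩ := ih
    refine ⟨k + 1, ?_⟩
    rw [pow_succ, Matrix.mul_apply]
    refine Finset.sum_pos' (fun a _ => mul_nonneg (pow_entry_nonneg hN k _ _) (hN _ _)) ?_
    exact ⟨_, Finset.mem_univ _, mul_pos hk hbc⟩

private lemma exp_entry_pos {N : Matrix (Fin n) (Fin n) ℝ} (hN : ∀ i j, 0 ≤ N i j)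
    (hdiag : ∀ i, 0 < N i i)
    (hirr : ∀ i j : Fin n, i ≠ j → Relation.TransGen (fun a b => 0 < N a b) i j)
    (i j : Fin n) : 0 < exp N i j := by
  have key : ∃ k : ℕ, 0 < (N ^ k) i j := by
    by_cases h : i = j
    · subst h; exact ⟨0, by simp [pow_zero, Matrix.one_apply]⟩
    · exact exists_pow_pos hN (hirr i j h)
  obtain ⟨k, hk⟩ := key
  calc (0 : ℝ) < ((k ! : ℝ))⁻¹ * (N ^ k) i j := by positivity
    _ ≤ exp N i j := le_exp_entry hN k i j

private lemma dob_upper (Q : Matrix (Fin n) (Fin n) ℝ) (δ : ℝ)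
    (hQ : ∀ i j, δ ≤ Q i j) (hrow : ∀ i, ∑ j, Q i j = 1) (y : Fin n → ℝ)
    (hne : (Finset.univ : Finset (Fin n)).Nonempty) (i : Fin n) :
    (Q *ᵥ y) i ≤ (1 - n * δ) * Finset.univ.sup' hne y + δ * ∑ j, y j := by
  have h1 : (Q *ᵥ y) i = ∑ j, Q i j * y j := by
    simp [Matrix.mulVec, dotProduct]
  have h2 : ∀ j : Fin n, Q i j * y j = (Q i j - δ) * y j + δ * y j := fun j => by ring
  rw [h1, Finset.sum_congr rfl fun j _ => h2 j, Finset.sum_add_distrib, ← Finset.mul_sum]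
  have h3 : ∑ j, (Q i j - δ) * y j ≤ ∑ j, (Q i j - δ) * Finset.univ.sup' hne y := by
    refine Finset.sum_le_sum fun j _ => ?_
    exact mul_le_mul_of_nonneg_left (Finset.le_sup' y (Finset.mem_univ j))
      (sub_nonneg.mpr (hQ i j))
  have h4 : ∑ j, (Q i j - δ) * Finset.univ.sup' hne y
      = (1 - n * δ) * Finset.univ.sup' hne y := by
    rw [← Finset.sum_mul, Finset.sum_sub_distrib, hrow i, Finset.sum_const,
      Finset.card_univ, Fintype.card_fin, nsmul_eq_mul]
  linarith [h3, h4.le]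

private lemma dob_lower (Q : Matrix (Fin n) (Fin n) ℝ) (δ : ℝ)
    (hQ : ∀ i j, δ ≤ Q i j) (hrow : ∀ i, ∑ j, Q i j = 1) (y : Fin n → ℝ)
    (hne : (Finset.univ : Finset (Fin n)).Nonempty) (i : Fin n) :
    (1 - n * δ) * Finset.univ.inf' hne y + δ * ∑ j, y j ≤ (Q *ᵥ y) i := by
  have h := dob_upper Q δ hQ hrow (-y) hne i
  have h1 : (Q *ᵥ (-y)) i = -((Q *ᵥ y) i) := by
    simp [Matrix.mulVec, dotProduct, Finset.sum_neg_distrib]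
  have h2 : Finset.univ.sup' hne (-y) = -(Finset.univ.inf' hne y) := by
    refine le_antisymm (Finset.sup'_le _ _ fun j _ => ?_) ?_
    · exact neg_le_neg (Finset.inf'_le y (Finset.mem_univ j))
    · obtain ⟨j, -, hj⟩ := Finset.exists_mem_eq_inf' hne y
      rw [hj]
      exact Finset.le_sup' (-y) (Finset.mem_univ j)
  have h3 : ∑ j, (-y) j = -∑ j, y j := by simp
  rw [h1, h2, h3] at h
  linarith

private lemma one_sub_nonneg {Q : Matrix (Fin n) (Fin n) ℝ} {δ : ℝ} (hn : 0 < n)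
    (hQ : ∀ i j, δ ≤ Q i j) (hrow : ∀ i, ∑ j, Q i j = 1) : 0 ≤ 1 - n * δ := by
  have i0 : Fin n := ⟨0, hn⟩
  have h1 : (n : ℝ) * δ = ∑ _j : Fin n, δ := by
    rw [Finset.sum_const, Finset.card_univ, Fintype.card_fin, nsmul_eq_mul]
  have h2 : ∑ _j : Fin n, δ ≤ ∑ j, Q i0 j := Finset.sum_le_sum fun j _ => hQ i0 j
  rw [hrow i0] at h2
  linarith [h1 ▸ h2]

/-- A matrix is Metzler if all its off-diagonal entries are nonnegative. -/
def IsMetzler {n : ℕ} (Q : Matrix (Fin n) (Fin n) ℝ) : Prop :=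
  ∀ i j, i ≠ j → 0 ≤ Q i j

/-- A rate matrix is a Metzler matrix whose rows each sum to zero. -/
def IsRateMatrix {n : ℕ} (Q : Matrix (Fin n) (Fin n) ℝ) : Prop :=
  IsMetzler Q ∧ Q *ᵥ (fun _ => (1 : ℝ)) = 0

/-- A matrix is irreducible if the directed graph with an edge `i → j` whenever
`i ≠ j` and `Q i j ≠ 0` is strongly connected. -/
def IsIrreducibleMatrix {n : ℕ} (Q : Matrix (Fin n) (Fin n) ℝ) : Prop :=
  ∀ i j : Fin n, i ≠ j → Relation.TransGen (fun a b => a ≠ b ∧ Q a b ≠ 0) i j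

end Aux

/-- Let `A` be an irreducible rate matrix and `z` an entrywise positive vector
with `zᵀ A = 0` and `1ᵀ z = 1`.  Then `e^{At} → 1·zᵀ` as `t → ∞`. -/
theorem exp_tendsto_spectral_projector {n : ℕ} (A : Matrix (Fin n) (Fin n) ℝ)
    (hrate : IsRateMatrix A) (hirr : IsIrreducibleMatrix A)
    (z : Fin n → ℝ) (hz_pos : ∀ i, 0 < z i)
    (hz_left : z ᵥ* A = 0) (hz_sum : ∑ i, z i = 1) :
    Tendsto (fun t : ℝ => NormedSpace.exp (t • A)) atTop
      (nhds (vecMulVec (fun _ => (1 : ℝ)) z)) := by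
  obtain ⟨hmetz, hrows⟩ := hrate
  rcases Nat.eq_zero_or_pos n with hn | hn
  · subst hn
    haveI : Subsingleton (Matrix (Fin 0) (Fin 0) ℝ) :=
      ⟨fun a b => by ext i j; exact i.elim0⟩
    have he : (fun t : ℝ => NormedSpace.exp (t • A))
        = fun _ => vecMulVec (fun _ => (1 : ℝ)) z :=
      funext fun t => Subsingleton.elim _ _
    rw [he]
    exact tendsto_const_nhds
  haveI : Nonempty (Fin n) := ⟨⟨0, hn⟩⟩
  have hne : (Finset.univ : Finset (Fin n)).Nonempty := Finset.univ_nonempty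
  -- row sums of A vanish
  have hrowA : ∀ i, ∑ j, A i j = 0 := by
    intro i
    have h := congrFun hrows i
    simpa [Matrix.mulVec, dotProduct] using h
  -- the shifted nonnegative matrix N
  set c : ℝ := 1 + ∑ k, |A k k| with hc_def
  set N : Matrix (Fin n) (Fin n) ℝ := A + c • (1 : Matrix (Fin n) (Fin n) ℝ) with hN_def
  have hcpos : ∀ i, 0 < A i i + c := by
    intro i
    have h1 : |A i i| ≤ ∑ k, |A k k| :=
      Finset.single_le_sum (f := fun k => |A k k|) (fun k _ => abs_nonneg _) (Finset.mem_univ i)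
    have h2 := neg_abs_le (A i i)
    rw [hc_def]; linarith
  have hNentry : ∀ i j, N i j = A i j + (if i = j then c else 0) := by
    intro i j
    rw [hN_def]
    simp [Matrix.add_apply, Matrix.smul_apply, Matrix.one_apply, mul_ite]
  have hN0 : ∀ i j, 0 ≤ N i j := by
    intro i j
    rw [hNentry]
    by_cases h : i = j
    · subst h; simp only [if_true]; exact (hcpos i).le
    · simp only [h, if_false, add_zero]; exact hmetz i j h
  have hNdiag : ∀ i, 0 < N i i := by
    intro i; rw [hNentry]; simpa using hcpos i
  have hNirr : ∀ i j : Fin n, i ≠ j → Relation.TransGen (fun a b => 0 < N a b) i j := by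
    intro i j hij
    refine Relation.TransGen.mono ?_ i j (hirr i j hij)
    rintro a b ⟨hab, hA⟩
    have h0 : 0 ≤ A a b := hmetz a b hab
    have : N a b = A a b := by rw [hNentry]; simp [hab]
    rw [this]
    exact lt_of_le_of_ne h0 (Ne.symm hA)
  -- decomposition t • A = (-(t*c)) • 1 + t • N
  have hdecomp : ∀ t : ℝ, t • A = (-(t * c)) • (1 : Matrix (Fin n) (Fin n) ℝ) + t • N := by
    intro t
    rw [hN_def, smul_add, smul_smul]
    module
  have hPformula : ∀ t : ℝ,
      NormedSpace.exp (t • A) = Real.exp (-(t * c)) • NormedSpace.exp (t • N) := by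
    intro t
    rw [hdecomp t, exp_smul_one_add]
  have htN0 : ∀ t : ℝ, 0 ≤ t → ∀ i j, 0 ≤ (t • N) i j := by
    intro t ht i j
    rw [Matrix.smul_apply]
    exact smul_nonneg ht (hN0 i j)
  have hPnonneg : ∀ t : ℝ, 0 ≤ t → ∀ i j, 0 ≤ NormedSpace.exp (t • A) i j := by
    intro t ht i j
    rw [hPformula t, Matrix.smul_apply]
    exact smul_nonneg (Real.exp_pos _).le (exp_entry_nonneg (htN0 t ht) i j)
  have hProw : ∀ (t : ℝ) (i : Fin n), ∑ j, NormedSpace.exp (t • A) i j = 1 := by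
    intro t i
    refine row_sum_exp (fun i => ?_) i
    simp only [Matrix.smul_apply, smul_eq_mul]
    rw [← Finset.mul_sum, hrowA i, mul_zero]
  have hPz : ∀ (t : ℝ) (j : Fin n), ∑ i, z i * NormedSpace.exp (t • A) i j = z j := by
    intro t j
    refine z_invariant ?_ j
    have hvm : z ᵥ* (t • A) = t • (z ᵥ* A) := by
      ext a
      simp only [Matrix.vecMul, dotProduct, Matrix.smul_apply, Pi.smul_apply, smul_eq_mul]
      rw [Finset.mul_sum]
      exact Finset.sum_congr rfl fun i _ => by ring
    rw [hvm, hz_left, smul_zero]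
  -- positivity at time 1
  have hP1pos : ∀ i j, 0 < NormedSpace.exp ((1 : ℝ) • A) i j := by
    intro i j
    rw [hPformula 1, Matrix.smul_apply, one_smul]
    exact mul_pos (Real.exp_pos _) (exp_entry_pos hN0 hNdiag hNirr i j)
  -- the Dobrushin coefficient
  set δ : ℝ := Finset.univ.inf' (Finset.univ_nonempty)
      (fun p : Fin n × Fin n => NormedSpace.exp ((1 : ℝ) • A) p.1 p.2) with hδ_def
  have hδpos : 0 < δ := by
    rw [hδ_def]
    exact (Finset.lt_inf'_iff _).mpr fun p _ => hP1pos p.1 p.2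
  have hδle : ∀ i j, δ ≤ NormedSpace.exp ((1 : ℝ) • A) i j := by
    intro i j
    rw [hδ_def]
    exact Finset.inf'_le _ (Finset.mem_univ (i, j))
  set r : ℝ := 1 - n * δ with hr_def
  have hr0 : 0 ≤ r := one_sub_nonneg hn hδle (hProw 1)
  have hr1 : r < 1 := by
    have h1 : 0 < (n : ℝ) * δ := mul_pos (by exact_mod_cast hn) hδpos
    rw [hr_def]; linarith
  -- semigroup property
  have hsg : ∀ s t : ℝ, NormedSpace.exp ((s + t) • A)
      = NormedSpace.exp (s • A) * NormedSpace.exp (t • A) := by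
    intro s t
    rw [add_smul]
    exact Matrix.exp_add_of_commute _ _ (((Commute.refl A).smul_left s).smul_right t)
  -- entrywise convergence
  have key : ∀ i j : Fin n,
      Tendsto (fun t : ℝ => NormedSpace.exp (t • A) i j) atTop (nhds (z j)) := by
    intro i j
    set y : ℕ → Fin n → ℝ := fun k a => NormedSpace.exp ((k : ℝ) • A) a j with hy_def
    have hosc : ∀ k : ℕ,
        Finset.univ.sup' hne (y k) - Finset.univ.inf' hne (y k) ≤ r ^ k := by
      intro k
      induction k with
      | zero =>
        have h0 : ∀ a, y 0 a = if a = j then 1 else 0 := by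
          intro a
          show NormedSpace.exp (((0:ℕ) : ℝ) • A) a j = _
          simp only [Nat.cast_zero, zero_smul, NormedSpace.exp_zero]
          rw [Matrix.one_apply]
        have hsup : Finset.univ.sup' hne (y 0) ≤ 1 :=
          Finset.sup'_le _ _ fun a _ => by rw [h0 a]; split <;> norm_num
        have hinf : (0:ℝ) ≤ Finset.univ.inf' hne (y 0) :=
          Finset.le_inf' _ _ fun a _ => by rw [h0 a]; split <;> norm_num
        rw [pow_zero]
        linarith
      | succ k ih =>
        have hrec : y (k + 1) = (NormedSpace.exp ((1:ℝ) • A)) *ᵥ y k := by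
          funext a
          show NormedSpace.exp (((k+1:ℕ) : ℝ) • A) a j = _
          have hcast : ((k + 1 : ℕ) : ℝ) = (1 : ℝ) + (k : ℝ) := by push_cast; ring
          rw [hcast, hsg 1 (k : ℝ)]
          simp [Matrix.mul_apply, Matrix.mulVec, dotProduct, hy_def]
        have hup : Finset.univ.sup' hne (y (k+1)) ≤
            (1 - n * δ) * Finset.univ.sup' hne (y k) + δ * ∑ a, y k a := by
          rw [hrec]
          exact Finset.sup'_le _ _ fun a _ =>
            dob_upper _ δ hδle (hProw 1) (y k) hne a
        have hlo : (1 - n * δ) * Finset.univ.inf' hne (y k) + δ * ∑ a, y k a ≤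
            Finset.univ.inf' hne (y (k+1)) := by
          rw [hrec]
          exact Finset.le_inf' _ _ fun a _ =>
            dob_lower _ δ hδle (hProw 1) (y k) hne a
        have hexpand : (1 - (n:ℝ) * δ) * (Finset.univ.sup' hne (y k) - Finset.univ.inf' hne (y k))
            = ((1 - n * δ) * Finset.univ.sup' hne (y k) + δ * ∑ a, y k a)
              - ((1 - n * δ) * Finset.univ.inf' hne (y k) + δ * ∑ a, y k a) := by ring
        have h6 : Finset.univ.sup' hne (y (k+1)) - Finset.univ.inf' hne (y (k+1))
            ≤ r * (Finset.univ.sup' hne (y k) - Finset.univ.inf' hne (y k)) := by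
          rw [hr_def]
          linarith [hup, hlo, hexpand]
        calc Finset.univ.sup' hne (y (k+1)) - Finset.univ.inf' hne (y (k+1))
            ≤ r * (Finset.univ.sup' hne (y k) - Finset.univ.inf' hne (y k)) := h6
          _ ≤ r * r ^ k := mul_le_mul_of_nonneg_left ih hr0
          _ = r ^ (k+1) := (pow_succ' r k).symm
    have hbound : ∀ t : ℝ, 0 ≤ t →
        |NormedSpace.exp (t • A) i j - z j| ≤ r ^ (⌊t⌋₊) := by
      intro t ht
      set k := ⌊t⌋₊ with hk_def
      set s := t - (k:ℝ) with hs_def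
      have hs0 : 0 ≤ s := by
        rw [hs_def, hk_def]
        have := Nat.floor_le ht
        linarith
      have hts : t = s + (k:ℝ) := by rw [hs_def]; ring
      have hcol : ∀ a, NormedSpace.exp (t • A) a j
          = (NormedSpace.exp (s • A) *ᵥ y k) a := by
        intro a
        conv_lhs => rw [hts]
        rw [hsg s (k:ℝ)]
        simp [Matrix.mul_apply, Matrix.mulVec, dotProduct, hy_def]
      have hub : ∀ a, NormedSpace.exp (t • A) a j ≤ Finset.univ.sup' hne (y k) := by
        intro a
        rw [hcol a]
        have h := dob_upper (NormedSpace.exp (s • A)) 0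
          (fun i' j' => hPnonneg s hs0 i' j') (hProw s) (y k) hne a
        simpa using h
      have hlb : ∀ a, Finset.univ.inf' hne (y k) ≤ NormedSpace.exp (t • A) a j := by
        intro a
        rw [hcol a]
        have h := dob_lower (NormedSpace.exp (s • A)) 0
          (fun i' j' => hPnonneg s hs0 i' j') (hProw s) (y k) hne a
        simpa using h
      have hzub : z j ≤ Finset.univ.sup' hne (y k) := by
        calc z j = ∑ a, z a * NormedSpace.exp (t • A) a j := (hPz t j).symm
          _ ≤ ∑ a, z a * Finset.univ.sup' hne (y k) :=
              Finset.sum_le_sum fun a _ =>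
                mul_le_mul_of_nonneg_left (hub a) (hz_pos a).le
          _ = Finset.univ.sup' hne (y k) := by rw [← Finset.sum_mul, hz_sum, one_mul]
      have hzlb : Finset.univ.inf' hne (y k) ≤ z j := by
        calc Finset.univ.inf' hne (y k) = ∑ a, z a * Finset.univ.inf' hne (y k) := by
              rw [← Finset.sum_mul, hz_sum, one_mul]
          _ ≤ ∑ a, z a * NormedSpace.exp (t • A) a j :=
              Finset.sum_le_sum fun a _ =>
                mul_le_mul_of_nonneg_left (hlb a) (hz_pos a).le
          _ = z j := hPz t j
      have hok := hosc k
      exact abs_sub_le_iff.mpr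
        ⟨by linarith [hub i, hzlb], by linarith [hlb i, hzub]⟩
    have hrk : Tendsto (fun t : ℝ => r ^ (⌊t⌋₊)) atTop (nhds 0) :=
      (tendsto_pow_atTop_nhds_zero_of_lt_one hr0 hr1).comp tendsto_nat_floor_atTop
    have habs : Tendsto (fun t : ℝ => |NormedSpace.exp (t • A) i j - z j|)
        atTop (nhds 0) := by
      refine squeeze_zero' (Eventually.of_forall fun t => abs_nonneg _) ?_ hrk
      filter_upwards [eventually_ge_atTop (0:ℝ)] with t ht using hbound t ht
    exact tendsto_iff_dist_tendsto_zero.mpr (by simpa [Real.dist_eq] using habs)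
  refine tendsto_pi_nhds.mpr fun i => tendsto_pi_nhds.mpr fun j => ?_
  have hvv : vecMulVec (fun _ => (1:ℝ)) z i j = z j := by
    simp [Matrix.vecMulVec_apply]
  rw [hvv]
  exact key i j
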